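/- Let f : ℝ × [0,1] → ℝ be continuous, C¹ in u, with f(t,0) = f(t,1) = 0 for all t. Let f₋ : [0,1] → ℝ be C¹ with f₋(0) = f₋(1) = 0, μ₋ := f₋′(0), and such that s ↦ f₋(s)/s is nonincreasing on (0,1]. Let ζ : ℝ → [0,+∞) be continuous and satisfy (1 − ζ(t))·f₋(s) ≤ f(t,s) ≤ (1 + ζ(t))·f₋(s) for all t ∈ ℝ and s ∈ [0,1]. Fix T ∈ ℝ, let u be a classical solution of u_t = u_xx + f(t,u) on [T,+∞) × ℝ with 0 < u < 1, and let v be a classical solution of v_t = v_xx + f₋(v) on (T,+∞) × ℝ with 0 ≤ v ≤ 1 and initial condition v(T,·) = u(T,·). Then for all t ≥ T and x ∈ ℝ: u(t,x)·exp(−μ₋·∫_T^t ζ(τ)dτ) ≤ v(t,x) ≤ u(t,x)·exp(μ₋·∫_T^t ζ(τ)dτ). -/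

import Mathlib

open Real Filter Set MeasureTheory

/-- Time derivative of `u` at `(t,x)`. -/
noncomputable def dT (u : ℝ → ℝ → ℝ) (t x : ℝ) : ℝ := deriv (fun s => u s x) t

/-- First space derivative of `u` at `(t,x)`. -/
noncomputable def dX (u : ℝ → ℝ → ℝ) (t x : ℝ) : ℝ := deriv (fun y => u t y) x

/-- Second space derivative of `u` at `(t,x)`. -/
noncomputable def dXX (u : ℝ → ℝ → ℝ) (t x : ℝ) : ℝ := deriv (deriv (fun y => u t y)) x

/-- `u` is a classical (time-global) solution of `u_t = u_xx + f(t,u)` on `ℝ × ℝ`. -/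
def SolPDE (f u : ℝ → ℝ → ℝ) : Prop :=
  ∀ t x : ℝ,
    DifferentiableAt ℝ (fun s => u s x) t ∧
    DifferentiableAt ℝ (fun y => u t y) x ∧
    DifferentiableAt ℝ (deriv (fun y => u t y)) x ∧
    dT u t x = dXX u t x + f t (u t x)

/-- The uniform-in-time limits defining a transition front connecting 0 and 1. -/
def FrontLimits (u : ℝ → ℝ → ℝ) (X : ℝ → ℝ) : Prop :=
  ∀ ε > (0:ℝ), ∃ M : ℝ, ∀ t x : ℝ,
    (x ≤ -M → |u t (X t + x) - 1| ≤ ε) ∧ (M ≤ x → |u t (X t + x)| ≤ ε)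

/-- `u` is a transition front connecting 0 and 1 for `u_t = u_xx + f(t,u)`,
with front position `X`. -/
def IsTransitionFront (f u : ℝ → ℝ → ℝ) (X : ℝ → ℝ) : Prop :=
  SolPDE f u ∧ (∀ t x : ℝ, u t x ∈ Icc (0:ℝ) 1) ∧ FrontLimits u X

/-- `u` has asymptotic past speed `c`. -/
def PastSpeed (X : ℝ → ℝ) (c : ℝ) : Prop :=
  Tendsto (fun t => X t / t) atBot (nhds c)

/-- `u` has asymptotic future speed `c`. -/
def FutureSpeed (X : ℝ → ℝ) (c : ℝ) : Prop :=
  Tendsto (fun t => X t / t) atTop (nhds c)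

/-- Standing regularity assumptions: `f` is uniformly Hölder continuous on `ℝ × [0,1]`,
of class `C¹` there, with bounded `∂f/∂u`. -/
def Reg (f : ℝ → ℝ → ℝ) : Prop :=
  (∃ α L : ℝ, α ∈ Ioc (0:ℝ) 1 ∧ 0 < L ∧
    ∀ t₁ t₂ v₁ v₂ : ℝ, v₁ ∈ Icc (0:ℝ) 1 → v₂ ∈ Icc (0:ℝ) 1 →
      |f t₁ v₁ - f t₂ v₂| ≤ L * (|t₁ - t₂| + |v₁ - v₂|) ^ α) ∧
  ContDiffOn ℝ 1 (fun p : ℝ × ℝ => f p.1 p.2) (univ ×ˢ Icc (0:ℝ) 1) ∧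
  (∃ M : ℝ, ∀ t : ℝ, ∀ v ∈ Icc (0:ℝ) 1, |deriv (f t) v| ≤ M)

/-- Hypothesis (H1). -/
def H1 (f : ℝ → ℝ → ℝ) : Prop :=
  (∀ t : ℝ, f t 0 = 0 ∧ f t 1 = 0) ∧
  (∀ t : ℝ, ∀ v ∈ Icc (0:ℝ) 1, 0 ≤ f t v) ∧
  (∀ t v w : ℝ, 0 < v → v ≤ w → w ≤ 1 → f t w / w ≤ f t v / v)

/-- Hypothesis (H2): limiting nonlinearities `fm = f₋`, `fp = f₊` with
`μm = f₋'(0) > 0`, `μp = f₊'(0) > 0`. -/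
def H2 (f : ℝ → ℝ → ℝ) (fm fp : ℝ → ℝ) (μm μp : ℝ) : Prop :=
  ContDiffOn ℝ 1 fm (Icc (0:ℝ) 1) ∧ ContDiffOn ℝ 1 fp (Icc (0:ℝ) 1) ∧
  fm 0 = 0 ∧ fm 1 = 0 ∧ fp 0 = 0 ∧ fp 1 = 0 ∧
  (∀ v ∈ Ioo (0:ℝ) 1, 0 < fm v) ∧ (∀ v ∈ Ioo (0:ℝ) 1, 0 < fp v) ∧
  (∀ ε > (0:ℝ), ∃ T : ℝ, ∀ t ≤ T, ∀ v ∈ Ioo (0:ℝ) 1, |f t v / fm v - 1| ≤ ε) ∧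
  (∀ ε > (0:ℝ), ∃ T : ℝ, ∀ t ≥ T, ∀ v ∈ Ioo (0:ℝ) 1, |f t v / fp v - 1| ≤ ε) ∧
  HasDerivWithinAt fm μm (Ici (0:ℝ)) 0 ∧ HasDerivWithinAt fp μp (Ici (0:ℝ)) 0 ∧
  0 < μm ∧ 0 < μp

/-- Hypothesis (H3). -/
def H3 (f : ℝ → ℝ → ℝ) : Prop :=
  ∃ C δ ω : ℝ, 0 < C ∧ δ ∈ Ioc (0:ℝ) 1 ∧ ω ∈ Ioc (0:ℝ) 1 ∧
    ∀ t : ℝ, ∀ v ∈ Ioo (0:ℝ) δ, deriv (f t) 0 * v - C * v ^ (1 + ω) ≤ f t v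

/-- Hypothesis (H4). -/
def H4 (f : ℝ → ℝ → ℝ) (fm : ℝ → ℝ) : Prop :=
  ∃ ζ : ℝ → ℝ, ContinuousOn ζ (Iio (0:ℝ)) ∧ IntegrableOn ζ (Iio (0:ℝ)) ∧
    ∀ t < (0:ℝ), ∀ s ∈ Ioo (0:ℝ) 1, |f t s / fm s - 1| ≤ ζ t

/-- Hypothesis (H5). -/
def H5 (f : ℝ → ℝ → ℝ) (fp : ℝ → ℝ) : Prop :=
  ∃ ζ : ℝ → ℝ, ContinuousOn ζ (Ioi (0:ℝ)) ∧ IntegrableOn ζ (Ioi (0:ℝ)) ∧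
    ∀ t > (0:ℝ), ∀ s ∈ Ioo (0:ℝ) 1, |f t s / fp s - 1| ≤ ζ t

/-- `φ` is a standard traveling front with speed `c` connecting 0 and 1 for the
homogeneous nonlinearity `g`, i.e. a decreasing solution of `φ'' + cφ' + g(φ) = 0`
with `φ(-∞) = 1`, `φ(+∞) = 0`. -/
def IsTravelingFront (g : ℝ → ℝ) (c : ℝ) (φ : ℝ → ℝ) : Prop :=
  (∀ x : ℝ, φ x ∈ Ioo (0:ℝ) 1) ∧ StrictAnti φ ∧
  (∀ x : ℝ, DifferentiableAt ℝ φ x ∧ DifferentiableAt ℝ (deriv φ) x ∧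
    deriv (deriv φ) x + c * deriv φ x + g (φ x) = 0) ∧
  Tendsto φ atBot (nhds 1) ∧ Tendsto φ atTop (nhds 0)

/-- `u(t, Y(t) + ·) → φ` in `C²(ℝ)` as `t → +∞`. -/
def C2ConvAtTop (u : ℝ → ℝ → ℝ) (Y : ℝ → ℝ) (φ : ℝ → ℝ) : Prop :=
  ∀ ε > (0:ℝ), ∃ T : ℝ, ∀ t ≥ T, ∀ x : ℝ,
    |u t (Y t + x) - φ x| ≤ ε ∧ |dX u t (Y t + x) - deriv φ x| ≤ ε ∧
    |dXX u t (Y t + x) - deriv (deriv φ) x| ≤ ε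

/-- `u(t, Y(t) + ·) → φ` in `C²(ℝ)` as `t → -∞`. -/
def C2ConvAtBot (u : ℝ → ℝ → ℝ) (Y : ℝ → ℝ) (φ : ℝ → ℝ) : Prop :=
  ∀ ε > (0:ℝ), ∃ T : ℝ, ∀ t ≤ T, ∀ x : ℝ,
    |u t (Y t + x) - φ x| ≤ ε ∧ |dX u t (Y t + x) - deriv φ x| ≤ ε ∧
    |dXX u t (Y t + x) - deriv (deriv φ) x| ≤ ε


open Topology in
/-- Second derivative is nonneg at a global min. -/
lemma aux_deriv2_nonneg (g : ℝ → ℝ) (x : ℝ)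
    (hdiff : ∀ y, DifferentiableAt ℝ g y)
    (hd2 : DifferentiableAt ℝ (deriv g) x)
    (hmin : ∀ y, g x ≤ g y) : 0 ≤ deriv (deriv g) x := by
  by_contra h
  push_neg at h
  have hg0 : deriv g x = 0 :=
    (IsLocalMin.deriv_eq_zero (Filter.Eventually.of_forall hmin))
  have hda : HasDerivAt (deriv g) (deriv (deriv g) x) x := hd2.hasDerivAt
  have hslope : Tendsto (slope (deriv g) x) (𝓝[>] x) (𝓝 (deriv (deriv g) x)) := by
    have h1 := hasDerivWithinAt_iff_tendsto_slope.1 (hda.hasDerivWithinAt (s := Ioi x))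
    have he : Ioi x \ {x} = Ioi x := by
      ext y; simp only [mem_diff, mem_Ioi, mem_singleton_iff]
      exact ⟨fun h => h.1, fun h => ⟨h, ne_of_gt h⟩⟩
    rwa [he] at h1
  have hneg : ∀ᶠ y in 𝓝[>] x, slope (deriv g) x y < 0 :=
    hslope.eventually_lt_const h
  -- extract an interval on which deriv g < 0
  have hneg' : ∀ᶠ y in 𝓝[>] x, deriv g y < 0 := by
    filter_upwards [hneg, self_mem_nhdsWithin] with y hy hy'
    rw [slope_def_field, hg0, sub_zero, div_neg_iff] at hy
    rcases hy with ⟨_, h2⟩ | ⟨h1, _⟩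
    · linarith [mem_Ioi.1 hy']
    · exact h1
  obtain ⟨u, hu, hsub⟩ := (mem_nhdsGT_iff_exists_Ioo_subset).1 hneg'
  set m := (x + u) / 2 with hm
  have hxm : x < m := by simp only [hm]; linarith [mem_Ioi.1 hu]
  have hmu : m < u := by simp only [hm]; linarith [mem_Ioi.1 hu]
  have hanti : StrictAntiOn g (Icc x m) := by
    apply strictAntiOn_of_deriv_neg (convex_Icc x m)
      (fun y _ => (hdiff y).continuousAt.continuousWithinAt)
    intro y hy
    rw [interior_Icc] at hy
    exact hsub ⟨hy.1, lt_trans hy.2 hmu⟩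
  have := hanti (left_mem_Icc.2 hxm.le) (right_mem_Icc.2 hxm.le) hxm
  exact absurd (hmin m) (not_le.2 this)

open Topology in
lemma aux_derivT_nonpos (g : ℝ → ℝ) (T t : ℝ) (hT : T < t)
    (hdiff : DifferentiableAt ℝ g t)
    (hpos : ∀ s, T ≤ s → s < t → 0 ≤ g s) (h0 : g t = 0) : deriv g t ≤ 0 := by
  have hda : HasDerivAt g (deriv g t) t := hdiff.hasDerivAt
  have hslope : Tendsto (slope g t) (𝓝[<] t) (𝓝 (deriv g t)) := by
    have h1 := hasDerivWithinAt_iff_tendsto_slope.1 (hda.hasDerivWithinAt (s := Iio t))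
    have he : Iio t \ {t} = Iio t := by
      ext y; simp only [mem_diff, mem_Iio, mem_singleton_iff]
      exact ⟨fun h => h.1, fun h => ⟨h, ne_of_lt h⟩⟩
    rwa [he] at h1
  refine le_of_tendsto hslope ?_
  filter_upwards [Ioo_mem_nhdsLT_of_mem (by exact ⟨hT, le_refl t⟩ : t ∈ Ioc T t)] with s hs
  rw [slope_def_field, h0, sub_zero]
  exact div_nonpos_of_nonneg_of_nonpos (hpos s hs.1.le hs.2) (by linarith [hs.2])

open Topology in
set_option maxHeartbeats 2000000 in
/-- Weak parabolic maximum principle on a strip `[T,t0] × ℝ` for bounded-below `w`. -/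
lemma aux_maxp (K B T t0 : ℝ) (hK : 0 ≤ K) (hB : 0 ≤ B) (hT : T < t0)
    (w : ℝ → ℝ → ℝ)
    (hw_cont : ContinuousOn (fun p : ℝ × ℝ => w p.1 p.2) (Icc T t0 ×ˢ univ))
    (hbd : ∀ t x, t ∈ Icc T t0 → -B ≤ w t x)
    (hinit : ∀ x, 0 ≤ w T x)
    (hdiffT : ∀ t x, T < t → t ≤ t0 → DifferentiableAt ℝ (fun s => w s x) t)
    (hdiffX : ∀ t x, T < t → t ≤ t0 → DifferentiableAt ℝ (fun y => w t y) x)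
    (hdiffXX : ∀ t x, T < t → t ≤ t0 → DifferentiableAt ℝ (deriv (fun y => w t y)) x)
    (hineq : ∀ t x, T < t → t ≤ t0 → w t x < 0 → dXX w t x + K * w t x ≤ dT w t x) :
    ∀ x, 0 ≤ w t0 x := by
  intro x0
  set lam : ℝ := K + 3 with hlam
  have hlampos : 0 < lam := by positivity
  -- the key claim, for every ε > 0
  have claim : ∀ ε > (0:ℝ), ∀ t x, T ≤ t → t ≤ t0 →
      0 < w t x + ε * (1 + (x - x0)^2) * Real.exp (lam * (t - T)) := by
    intro ε hε
    by_contra hcon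
    push_neg at hcon
    obtain ⟨t1, x1, ht1T, ht1t0, hφ1⟩ := hcon
    set φ : ℝ × ℝ → ℝ :=
      fun p => w p.1 p.2 + ε * (1 + (p.2 - x0)^2) * Real.exp (lam * (p.1 - T)) with hφ
    have hEone : ∀ t, T ≤ t → 1 ≤ Real.exp (lam * (t - T)) := by
      intro t ht
      rw [show (1:ℝ) = Real.exp 0 by simp]
      exact Real.exp_le_exp.2 (by nlinarith)
    have hQone : ∀ x : ℝ, 1 ≤ 1 + (x - x0)^2 := fun x => by nlinarith [sq_nonneg (x - x0)]
    set R : ℝ := Real.sqrt (B / ε) + 1 with hR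
    have hRpos : 0 < R := by positivity
    -- outside the strip, φ is positive
    have outside : ∀ t x, T ≤ t → t ≤ t0 → R ≤ |x - x0| → 0 < φ (t, x) := by
      intro t x htT htt0 hx
      have h1 : R^2 ≤ (x - x0)^2 := by
        rw [← sq_abs (x - x0)]
        exact pow_le_pow_left₀ hRpos.le hx 2
      have h2 : B / ε + 1 ≤ R^2 := by
        rw [hR]
        nlinarith [Real.sq_sqrt (by positivity : (0:ℝ) ≤ B / ε), Real.sqrt_nonneg (B / ε)]
      have h3 : B + ε ≤ ε * ((x - x0)^2) := by
        have h2' : B / ε + 1 ≤ (x - x0)^2 := le_trans h2 h1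
        have hBε : ε * (B / ε) = B := by field_simp
        nlinarith [mul_le_mul_of_nonneg_left h2' hε.le]
      have h4 : ε * (1 + (x - x0)^2) ≤ ε * (1 + (x - x0)^2) * Real.exp (lam * (t - T)) := by
        nlinarith [hEone t htT, hQone x]
      have h5 := hbd t x ⟨htT, htt0⟩
      simp only [hφ]
      nlinarith
    -- the touching set
    set S : Set (ℝ × ℝ) := (Icc T t0 ×ˢ Icc (x0 - R) (x0 + R)) ∩ φ ⁻¹' (Iic 0) with hS
    have hψcont : Continuous
        (fun p : ℝ × ℝ => ε * (1 + (p.2 - x0)^2) * Real.exp (lam * (p.1 - T))) := by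
      fun_prop
    have hφcont : ContinuousOn φ (Icc T t0 ×ˢ Icc (x0 - R) (x0 + R)) := by
      apply ContinuousOn.add
      · exact hw_cont.mono (prod_mono_right (subset_univ _))
      · exact hψcont.continuousOn
    have hScompact : IsCompact S := by
      refine IsCompact.of_isClosed_subset (isCompact_Icc.prod isCompact_Icc) ?_ inter_subset_left
      exact hφcont.preimage_isClosed_of_isClosed
        ((isClosed_Icc).prod isClosed_Icc) isClosed_Iic
    have hSne : S.Nonempty := by
      refine ⟨(t1, x1), ⟨⟨ht1T, ht1t0⟩, ?_⟩, hφ1⟩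
      by_contra hx1
      simp only [mem_Icc, not_and_or, not_le] at hx1
      have : R ≤ |x1 - x0| := by
        rcases hx1 with h | h
        · rw [abs_sub_comm, abs_of_pos (by linarith)]; linarith
        · rw [abs_of_pos (by linarith)]; linarith
      exact absurd hφ1 (not_le.2 (outside t1 x1 ht1T ht1t0 this))
    obtain ⟨p, hpS, hpmin⟩ := hScompact.exists_isMinOn hSne continuous_fst.continuousOn
    obtain ⟨⟨⟨hpT, hpt0⟩, _⟩, hpφ⟩ := hpS
    set ts := p.1 with hts
    set xs := p.2 with hxs
    have hφp : φ (ts, xs) ≤ 0 := hpφ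
    have hinitφ : ∀ x, 0 < φ (T, x) := by
      intro x
      have := hinit x
      have h1 := hQone x
      have : (0:ℝ) < ε * (1 + (x - x0)^2) * Real.exp (lam * (T - T)) := by positivity
      simp only [hφ]
      nlinarith [hinit x, hQone x, Real.exp_pos (lam * (T - T)),
        hEone T le_rfl, mul_le_mul_of_nonneg_left (hEone T le_rfl)
          (by positivity : (0:ℝ) ≤ ε * (1 + (x - x0)^2))]
    have hTts : T < ts := by
      rcases eq_or_lt_of_le hpT with h | h
      · exact absurd hφp (not_le.2 (by rw [← h] at hφp ⊢; exact hinitφ xs))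
      · exact h
    -- before time ts, φ is positive everywhere
    have hfirst : ∀ t x, T ≤ t → t < ts → 0 < φ (t, x) := by
      intro t x htT htts
      by_contra hc
      push_neg at hc
      have htt0 : t ≤ t0 := le_trans htts.le hpt0
      have hxin : x ∈ Icc (x0 - R) (x0 + R) := by
        by_contra hx
        simp only [mem_Icc, not_and_or, not_le] at hx
        have : R ≤ |x - x0| := by
          rcases hx with h | h
          · rw [abs_sub_comm, abs_of_pos (by linarith)]; linarith
          · rw [abs_of_pos (by linarith)]; linarith
        exact absurd hc (not_le.2 (outside t x htT htt0 this))
      have : (t, x) ∈ S := ⟨⟨⟨htT, htt0⟩, hxin⟩, hc⟩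
      exact absurd (hpmin this) (not_le.2 htts)
    -- at time ts, φ is nonneg everywhere
    have hmin0 : ∀ x, 0 ≤ φ (ts, x) := by
      intro x
      have hcont : ContinuousWithinAt (fun t => φ (t, x)) (Ioo T ts) ts := by
        have h1 : ContinuousWithinAt φ (Icc T t0 ×ˢ univ)
            (ts, x) := (hw_cont.add hψcont.continuousOn) _
          (by exact ⟨⟨hpT, hpt0⟩, mem_univ x⟩)
        have hg : ContinuousWithinAt (fun t : ℝ => (t, x)) (Icc T t0) ts :=
          (continuous_id.prodMk continuous_const).continuousWithinAt
        have h2 : ContinuousWithinAt (fun t => φ (t, x)) (Icc T t0) ts :=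
          ContinuousWithinAt.comp (g := φ) (f := fun t : ℝ => (t, x))
            (t := Icc T t0 ×ˢ univ) h1 hg (fun s hs => ⟨hs, mem_univ x⟩)
        exact h2.mono (fun s hs => ⟨hs.1.le, le_trans hs.2.le hpt0⟩)
      haveI hne : (𝓝[Ioo T ts] ts).NeBot := by
        rw [nhdsWithin_Ioo_eq_nhdsLT hTts]; exact inferInstance
      refine ge_of_tendsto hcont ?_
      filter_upwards [self_mem_nhdsWithin] with s hs
      exact (hfirst s x hs.1.le hs.2).le
    have hφ0 : φ (ts, xs) = 0 := le_antisymm hφp (hmin0 xs)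
    -- derivative computations at the first touching point
    obtain ⟨E, hEdef⟩ : ∃ E : ℝ, E = Real.exp (lam * (ts - T)) := ⟨_, rfl⟩
    have hEpos : 0 < E := hEdef ▸ Real.exp_pos _
    obtain ⟨gx, hgx⟩ : ∃ gx : ℝ → ℝ,
        gx = fun y => w ts y + ε * (1 + (y - x0)^2) * E := ⟨_, rfl⟩
    have hgxφ : ∀ y, gx y = φ (ts, y) := by
      intro y; simp only [hgx, hφ, hEdef]
    have hpolyd : ∀ y : ℝ, HasDerivAt (fun y' => ε * (1 + (y' - x0)^2) * E)
        (ε * (2 * (y - x0)) * E) y := by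
      intro y
      have h1 : HasDerivAt (fun y' : ℝ => (y' - x0)^2) (2 * (y - x0)) y := by
        simpa using ((hasDerivAt_id y).sub_const x0).fun_pow 2
      exact (h1.const_add 1).const_mul ε |>.mul_const E
    have hwd : ∀ y, DifferentiableAt ℝ (fun y' => w ts y') y :=
      fun y => hdiffX ts y hTts hpt0
    have hgxdiff : ∀ y, DifferentiableAt ℝ gx y := by
      intro y; rw [hgx]; exact (hwd y).add (hpolyd y).differentiableAt
    have hderiv_gx : deriv gx =
        fun y => deriv (fun y' => w ts y') y + ε * (2 * (y - x0)) * E := by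
      funext y
      rw [hgx]
      exact ((hwd y).hasDerivAt.add (hpolyd y)).deriv
    have hlind : HasDerivAt (fun y : ℝ => ε * (2 * (y - x0)) * E) (ε * 2 * E) xs := by
      have h1 : HasDerivAt (fun y : ℝ => 2 * (y - x0)) 2 xs := by
        simpa using ((hasDerivAt_id xs).sub_const x0).const_mul 2
      exact (h1.const_mul ε).mul_const E
    have hd2diff : DifferentiableAt ℝ (deriv gx) xs := by
      rw [hderiv_gx]
      exact (hdiffXX ts xs hTts hpt0).add hlind.differentiableAt
    have hd2eq : deriv (deriv gx) xs = dXX w ts xs + ε * 2 * E := by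
      rw [hderiv_gx]
      exact ((hdiffXX ts xs hTts hpt0).hasDerivAt.add hlind).deriv
    have hA : 0 ≤ dXX w ts xs + ε * 2 * E := by
      rw [← hd2eq]
      refine aux_deriv2_nonneg gx xs hgxdiff hd2diff (fun y => ?_)
      rw [hgxφ, hgxφ, hφ0]
      exact hmin0 y
    -- time derivative
    obtain ⟨gt, hgtdef⟩ : ∃ gt : ℝ → ℝ,
        gt = fun s => w s xs + ε * (1 + (xs - x0)^2) * Real.exp (lam * (s - T)) := ⟨_, rfl⟩
    have hgtφ : ∀ s, gt s = φ (s, xs) := by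
      intro s; simp only [hgtdef, hφ]
    have hexp : HasDerivAt (fun s => Real.exp (lam * (s - T))) (lam * E) ts := by
      have h1 : HasDerivAt (fun s : ℝ => lam * (s - T)) lam ts := by
        simpa using ((hasDerivAt_id ts).sub_const T).const_mul lam
      simpa [hEdef, mul_comm] using h1.exp
    have hgtd : HasDerivAt gt
        (dT w ts xs + ε * (1 + (xs - x0)^2) * (lam * E)) ts := by
      rw [hgtdef]
      have h2 := hexp.const_mul (ε * (1 + (xs - x0)^2))
      have h3 := (hdiffT ts xs hTts hpt0).hasDerivAt
      have h4 := h3.add h2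
      exact h4
    have hB : dT w ts xs + ε * (1 + (xs - x0)^2) * (lam * E) ≤ 0 := by
      rw [← hgtd.deriv]
      refine aux_derivT_nonpos gt T ts hTts hgtd.differentiableAt (fun s hs1 hs2 => ?_)
        (by rw [hgtφ]; exact hφ0)
      rw [hgtφ]
      exact (hfirst s xs hs1 hs2).le
    have hC : w ts xs = -(ε * (1 + (xs - x0)^2) * E) := by
      have h0' := hφ0
      simp only [hφ] at h0'
      rw [← hEdef] at h0'
      linarith
    have hwneg : w ts xs < 0 := by
      rw [hC]
      have h1 : (0:ℝ) < 1 + (xs - x0)^2 := by positivity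
      have : 0 < ε * (1 + (xs - x0)^2) * E := mul_pos (mul_pos hε h1) hEpos
      linarith
    have hi := hineq ts xs hTts hpt0 hwneg
    rw [hC] at hi
    rw [hlam] at hB
    have hQ := hQone xs
    nlinarith [mul_pos hε hEpos, mul_nonneg (mul_pos hε hEpos).le
      (by linarith : (0:ℝ) ≤ (1 + (xs - x0)^2) - 1),
      mul_nonneg (mul_nonneg hK (mul_pos hε hEpos).le)
      (by linarith : (0:ℝ) ≤ (1 + (xs - x0)^2) - 1)]
  -- conclude from the claim
  by_contra hneg
  push_neg at hneg
  have hE : (0:ℝ) < Real.exp (lam * (t0 - T)) := Real.exp_pos _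
  set ε := -w t0 x0 / (2 * Real.exp (lam * (t0 - T))) with hε
  have hεpos : 0 < ε := div_pos (by linarith) (by positivity)
  have h := claim ε hεpos t0 x0 hT.le le_rfl
  have hεe : ε * (1 + (x0 - x0)^2) * Real.exp (lam * (t0 - T)) = -w t0 x0 / 2 := by
    rw [hε]; field_simp; ring
  rw [hεe] at h
  linarith

open Topology in
/-- The slope of `fm` at `0` bounds `fm s / s`. -/
lemma aux_fm_div_le (fm : ℝ → ℝ) (μm : ℝ)
    (hfm0 : fm 0 = 0)
    (hμm : HasDerivWithinAt fm μm (Ici (0:ℝ)) 0)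
    (hmono : ∀ v w : ℝ, 0 < v → v ≤ w → w ≤ 1 → fm w / w ≤ fm v / v) :
    ∀ s : ℝ, 0 < s → s ≤ 1 → fm s / s ≤ μm := by
  intro s hs hs1
  have hslope : Tendsto (slope fm 0) (𝓝[>] 0) (𝓝 μm) := by
    have h1 := hasDerivWithinAt_iff_tendsto_slope.1 hμm
    have he : Ici (0:ℝ) \ {0} = Ioi 0 := by
      ext y; simp only [mem_diff, mem_Ici, mem_singleton_iff, mem_Ioi]
      constructor
      · rintro ⟨h1, h2⟩; exact lt_of_le_of_ne h1 (Ne.symm h2)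
      · intro h; exact ⟨h.le, ne_of_gt h⟩
    rwa [he] at h1
  refine ge_of_tendsto hslope ?_
  filter_upwards [Ioo_mem_nhdsGT_of_mem (by exact ⟨le_rfl, hs⟩ : (0:ℝ) ∈ Ico 0 s)] with v hv
  rw [slope_def_field, hfm0, sub_zero, sub_zero]
  exact hmono v s hv.1 hv.2.le hs1

lemma aux_lip (fm : ℝ → ℝ) (hfmC1 : ContDiffOn ℝ 1 fm (Icc (0:ℝ) 1)) :
    ∃ K : ℝ, 0 ≤ K ∧ ∀ a ∈ Icc (0:ℝ) 1, ∀ b ∈ Icc (0:ℝ) 1, |fm a - fm b| ≤ K * |a - b| := by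
  have hd : ContinuousOn (derivWithin fm (Icc (0:ℝ) 1)) (Icc (0:ℝ) 1) :=
    hfmC1.continuousOn_derivWithin (uniqueDiffOn_Icc one_pos) le_rfl
  obtain ⟨C, hC⟩ := isCompact_Icc.exists_bound_of_continuousOn hd
  refine ⟨max C 0, le_max_right _ _, fun a ha b hb => ?_⟩
  have := Convex.norm_image_sub_le_of_norm_derivWithin_le (C := max C 0)
    (hfmC1.differentiableOn one_ne_zero)
    (fun x hx => le_trans (hC x hx) (le_max_left C 0)) (convex_Icc 0 1) hb ha
  simpa [Real.norm_eq_abs] using this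

set_option maxHeartbeats 2000000 in
/-- Lemma 3.3, comparison lemma: sandwich estimate between a solution of
the time-dependent equation and the solution of the limiting homogeneous equation with
nonlinearity `f₋`, in terms of `∫ ζ`. -/
theorem stmt16 (f : ℝ → ℝ → ℝ) (fm : ℝ → ℝ) (μm : ℝ) (ζ : ℝ → ℝ) (T : ℝ)
    (hfc : Continuous (fun p : ℝ × ℝ => f p.1 p.2))
    (hfC1 : ∀ t : ℝ, ContDiffOn ℝ 1 (f t) (Icc (0:ℝ) 1))
    (hf0 : ∀ t : ℝ, f t 0 = 0 ∧ f t 1 = 0)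
    (hfmC1 : ContDiffOn ℝ 1 fm (Icc (0:ℝ) 1))
    (hfm0 : fm 0 = 0) (hfm1 : fm 1 = 0)
    (hμm : HasDerivWithinAt fm μm (Ici (0:ℝ)) 0)
    (hmono : ∀ v w : ℝ, 0 < v → v ≤ w → w ≤ 1 → fm w / w ≤ fm v / v)
    (hζc : Continuous ζ) (hζ0 : ∀ t : ℝ, 0 ≤ ζ t)
    (hsand : ∀ t : ℝ, ∀ s ∈ Icc (0:ℝ) 1,
      (1 - ζ t) * fm s ≤ f t s ∧ f t s ≤ (1 + ζ t) * fm s)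
    (u v : ℝ → ℝ → ℝ)
    (hu_cont : ContinuousOn (fun p : ℝ × ℝ => u p.1 p.2) (Ici T ×ˢ univ))
    (hu_eq : ∀ t : ℝ, T < t → ∀ x : ℝ,
      DifferentiableAt ℝ (fun s => u s x) t ∧
      DifferentiableAt ℝ (fun y => u t y) x ∧
      DifferentiableAt ℝ (deriv (fun y => u t y)) x ∧
      dT u t x = dXX u t x + f t (u t x))
    (hu_range : ∀ t : ℝ, T ≤ t → ∀ x : ℝ, u t x ∈ Ioo (0:ℝ) 1)
    (hv_cont : ContinuousOn (fun p : ℝ × ℝ => v p.1 p.2) (Ici T ×ˢ univ))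
    (hv_eq : ∀ t : ℝ, T < t → ∀ x : ℝ,
      DifferentiableAt ℝ (fun s => v s x) t ∧
      DifferentiableAt ℝ (fun y => v t y) x ∧
      DifferentiableAt ℝ (deriv (fun y => v t y)) x ∧
      dT v t x = dXX v t x + fm (v t x))
    (hv_range : ∀ t : ℝ, T ≤ t → ∀ x : ℝ, v t x ∈ Icc (0:ℝ) 1)
    (hv_init : ∀ x : ℝ, v T x = u T x) :
    ∀ t : ℝ, T ≤ t → ∀ x : ℝ,
      u t x * Real.exp (-(μm * ∫ τ in T..t, ζ τ)) ≤ v t x ∧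
      v t x ≤ u t x * Real.exp (μm * ∫ τ in T..t, ζ τ) := by
  -- Lipschitz constant for fm
  obtain ⟨K, hK0, hKlip⟩ := aux_lip fm hfmC1
  -- basic fm facts
  have hdivle : ∀ s : ℝ, 0 < s → s ≤ 1 → fm s / s ≤ μm := aux_fm_div_le fm μm hfm0 hμm hmono
  have hfmnonneg : ∀ s : ℝ, 0 < s → s ≤ 1 → 0 ≤ fm s := by
    intro s hs hs1
    have h := hmono s 1 hs hs1 le_rfl
    rw [hfm1] at h
    simp only [zero_div] at h
    have := mul_le_mul_of_nonneg_right h hs.le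
    rw [zero_mul, div_mul_cancel₀ _ (ne_of_gt hs)] at this
    exact this
  have hfmle : ∀ s : ℝ, 0 < s → s ≤ 1 → fm s ≤ μm * s := by
    intro s hs hs1
    have h := mul_le_mul_of_nonneg_right (hdivle s hs hs1) hs.le
    rwa [div_mul_cancel₀ _ (ne_of_gt hs)] at h
  have hμm0 : 0 ≤ μm := by
    have := hdivle 1 one_pos le_rfl
    rw [hfm1] at this
    simpa using this
  have hscaleLow : ∀ c s : ℝ, 0 < c → c ≤ 1 → 0 < s → s ≤ 1 → c * fm s ≤ fm (s * c) := by
    intro c s hc hc1 hs hs1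
    have h := hmono (s * c) s (by positivity) (by nlinarith) hs1
    rw [div_le_div_iff₀ hs (by positivity)] at h
    nlinarith
  have hscaleHigh : ∀ c s : ℝ, 1 ≤ c → 0 < s → s * c ≤ 1 → fm (s * c) ≤ c * fm s := by
    intro c s hc hs hsc
    have h := hmono s (s * c) hs (by nlinarith) hsc
    rw [div_le_div_iff₀ (by positivity) hs] at h
    nlinarith
  -- integral facts
  have hΘd : ∀ s : ℝ, HasDerivAt (fun r => ∫ τ in T..r, ζ τ) (ζ s) s := fun s =>
    intervalIntegral.integral_hasDerivAt_right (hζc.intervalIntegrable T s)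
      (hζc.stronglyMeasurableAtFilter _ _) hζc.continuousAt
  have hΘc : Continuous (fun s => ∫ τ in T..s, ζ τ) :=
    continuous_iff_continuousAt.2 fun s => (hΘd s).continuousAt
  have hΘnonneg : ∀ s : ℝ, T ≤ s → 0 ≤ ∫ τ in T..s, ζ τ := fun s hs =>
    intervalIntegral.integral_nonneg hs (fun τ _ => hζ0 τ)
  intro t1 ht1 x1
  rcases eq_or_lt_of_le ht1 with heq | hT1
  · subst heq
    constructor <;> simp [intervalIntegral.integral_same, hv_init x1]
  -- exp derivative helpers
  have hEm : ∀ s : ℝ, HasDerivAt (fun r => Real.exp (-(μm * ∫ τ in T..r, ζ τ)))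
      (Real.exp (-(μm * ∫ τ in T..s, ζ τ)) * (-(μm * ζ s))) s := fun s =>
    (((hΘd s).const_mul μm).neg).exp
  have hEp : ∀ s : ℝ, HasDerivAt (fun r => Real.exp (μm * ∫ τ in T..r, ζ τ))
      (Real.exp (μm * ∫ τ in T..s, ζ τ) * (μm * ζ s)) s := fun s =>
    ((hΘd s).const_mul μm).exp
  have hEmc : Continuous (fun s => Real.exp (-(μm * ∫ τ in T..s, ζ τ))) :=
    Real.continuous_exp.comp ((continuous_const.mul hΘc).neg)
  have hEpc : Continuous (fun s => Real.exp (μm * ∫ τ in T..s, ζ τ)) :=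
    Real.continuous_exp.comp (continuous_const.mul hΘc)
  have hsub : (Icc T t1 ×ˢ (univ : Set ℝ)) ⊆ (Ici T ×ˢ (univ : Set ℝ)) :=
    prod_mono_left (Icc_subset_Ici_self)
  constructor
  · -- LOWER BOUND
    have hmain := aux_maxp K 2 T t1 hK0 (by norm_num) hT1
      (fun t x => v t x - u t x * Real.exp (-(μm * ∫ τ in T..t, ζ τ)))
      (by
        exact (hv_cont.mono hsub).sub ((hu_cont.mono hsub).mul
          ((hEmc.comp continuous_fst).continuousOn)))
      (by
        intro t x ht
        beta_reduce
        have hu := hu_range t ht.1 x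
        have hv := hv_range t ht.1 x
        have he0 : (0:ℝ) < Real.exp (-(μm * ∫ τ in T..t, ζ τ)) := Real.exp_pos _
        have he1 : Real.exp (-(μm * ∫ τ in T..t, ζ τ)) ≤ 1 := by
          rw [Real.exp_le_one_iff]
          have := hΘnonneg t ht.1
          nlinarith
        nlinarith [hu.1, hu.2, hv.1])
      (by
        intro x
        simp [intervalIntegral.integral_same, hv_init x])
      (by
        intro t x ht htt1
        exact (hv_eq t ht x).1.sub ((hu_eq t ht x).1.mul (hEm t).differentiableAt))
      (by
        intro t x ht htt1
        exact (hv_eq t ht x).2.1.sub ((hu_eq t ht x).2.1.mul_const _))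
      (by
        intro t x ht htt1
        have hx1 : (deriv fun y => v t y - u t y * Real.exp (-(μm * ∫ τ in T..t, ζ τ)))
            = fun y => deriv (fun y' => v t y') y -
              deriv (fun y' => u t y') y * Real.exp (-(μm * ∫ τ in T..t, ζ τ)) :=
          funext fun y => ((hv_eq t ht y).2.1.hasDerivAt.sub
            ((hu_eq t ht y).2.1.hasDerivAt.mul_const _)).deriv
        rw [hx1]
        exact (hv_eq t ht x).2.2.1.sub ((hu_eq t ht x).2.2.1.mul_const _)
      )
      (by
        intro t x ht htt1 hneg
        obtain ⟨hu1, hu2, hu3, hu4⟩ := hu_eq t ht x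
        obtain ⟨hv1, hv2, hv3, hv4⟩ := hv_eq t ht x
        have hdT : dT (fun t x => v t x - u t x * Real.exp (-(μm * ∫ τ in T..t, ζ τ))) t x
            = dT v t x - (dT u t x * Real.exp (-(μm * ∫ τ in T..t, ζ τ))
              + u t x * (Real.exp (-(μm * ∫ τ in T..t, ζ τ)) * (-(μm * ζ t)))) := by
          simp only [dT]
          exact (hv1.hasDerivAt.sub (hu1.hasDerivAt.mul (hEm t))).deriv
        have hx1 : (deriv fun y => v t y - u t y * Real.exp (-(μm * ∫ τ in T..t, ζ τ)))
            = fun y => deriv (fun y' => v t y') y -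
              deriv (fun y' => u t y') y * Real.exp (-(μm * ∫ τ in T..t, ζ τ)) :=
          funext fun y => ((hv_eq t ht y).2.1.hasDerivAt.sub
            ((hu_eq t ht y).2.1.hasDerivAt.mul_const _)).deriv
        have hdXX : dXX (fun t x => v t x - u t x * Real.exp (-(μm * ∫ τ in T..t, ζ τ))) t x
            = dXX v t x - dXX u t x * Real.exp (-(μm * ∫ τ in T..t, ζ τ)) := by
          simp only [dXX]
          rw [hx1]
          exact (hv3.hasDerivAt.sub (hu3.hasDerivAt.mul_const _)).deriv
        beta_reduce
        rw [hdT, hdXX, hu4, hv4]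
        -- abbreviations
        have hu := hu_range t ht.le x
        have hv := hv_range t ht.le x
        have he0 : (0:ℝ) < Real.exp (-(μm * ∫ τ in T..t, ζ τ)) := Real.exp_pos _
        have he1 : Real.exp (-(μm * ∫ τ in T..t, ζ τ)) ≤ 1 := by
          rw [Real.exp_le_one_iff]
          have := hΘnonneg t ht.le
          nlinarith
        have hψ0 : 0 < u t x * Real.exp (-(μm * ∫ τ in T..t, ζ τ)) :=
          mul_pos hu.1 he0
        have hψ1 : u t x * Real.exp (-(μm * ∫ τ in T..t, ζ τ)) < 1 := by
          have h := mul_le_of_le_one_right hu.1.le he1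
          linarith [hu.2]
        have hscale : Real.exp (-(μm * ∫ τ in T..t, ζ τ)) * fm (u t x)
            ≤ fm (u t x * Real.exp (-(μm * ∫ τ in T..t, ζ τ))) :=
          hscaleLow _ _ he0 he1 hu.1 hu.2.le
        have hfmu : fm (u t x) ≤ μm * u t x := hfmle _ hu.1 hu.2.le
        have hsand2 := (hsand t (u t x) ⟨hu.1.le, hu.2.le⟩).2
        have hz := hζ0 t
        have hlip := hKlip (u t x * Real.exp (-(μm * ∫ τ in T..t, ζ τ)))
          ⟨hψ0.le, hψ1.le⟩ (v t x) ⟨hv.1, hv.2⟩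
        have hneg2 : v t x < u t x * Real.exp (-(μm * ∫ τ in T..t, ζ τ)) := by linarith
        have hlip2 : fm (u t x * Real.exp (-(μm * ∫ τ in T..t, ζ τ))) - fm (v t x)
            ≤ K * (u t x * Real.exp (-(μm * ∫ τ in T..t, ζ τ)) - v t x) := by
          have h1 := le_trans (le_abs_self _) hlip
          rwa [abs_of_pos (by linarith : (0:ℝ) <
            u t x * Real.exp (-(μm * ∫ τ in T..t, ζ τ)) - v t x)] at h1
        have hprod1 : f t (u t x) * Real.exp (-(μm * ∫ τ in T..t, ζ τ))
            ≤ (1 + ζ t) * fm (u t x) * Real.exp (-(μm * ∫ τ in T..t, ζ τ)) :=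
          mul_le_mul_of_nonneg_right hsand2 he0.le
        have hprod2 : ζ t * (Real.exp (-(μm * ∫ τ in T..t, ζ τ)) * fm (u t x))
            ≤ ζ t * (Real.exp (-(μm * ∫ τ in T..t, ζ τ)) * (μm * u t x)) :=
          mul_le_mul_of_nonneg_left (mul_le_mul_of_nonneg_left hfmu he0.le) hz
        nlinarith [hscale, hlip2, hprod1, hprod2])
      x1
    linarith [hmain]
  · -- UPPER BOUND
    have hmain := aux_maxp K 2 T t1 hK0 (by norm_num) hT1
      (fun t x => u t x * Real.exp (μm * ∫ τ in T..t, ζ τ) - v t x)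
      (by
        exact ((hu_cont.mono hsub).mul
          ((hEpc.comp continuous_fst).continuousOn)).sub (hv_cont.mono hsub))
      (by
        intro t x ht
        beta_reduce
        have hu := hu_range t ht.1 x
        have hv := hv_range t ht.1 x
        have he0 : (0:ℝ) < Real.exp (μm * ∫ τ in T..t, ζ τ) := Real.exp_pos _
        nlinarith [hu.1, hv.2]
      )
      (by
        intro x
        simp [intervalIntegral.integral_same, hv_init x])
      (by
        intro t x ht htt1
        exact ((hu_eq t ht x).1.mul (hEp t).differentiableAt).sub (hv_eq t ht x).1)
      (by
        intro t x ht htt1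
        exact ((hu_eq t ht x).2.1.mul_const _).sub (hv_eq t ht x).2.1)
      (by
        intro t x ht htt1
        have hx1 : (deriv fun y => u t y * Real.exp (μm * ∫ τ in T..t, ζ τ) - v t y)
            = fun y => deriv (fun y' => u t y') y * Real.exp (μm * ∫ τ in T..t, ζ τ) -
              deriv (fun y' => v t y') y :=
          funext fun y => (((hu_eq t ht y).2.1.hasDerivAt.mul_const _).sub
            (hv_eq t ht y).2.1.hasDerivAt).deriv
        rw [hx1]
        exact ((hu_eq t ht x).2.2.1.mul_const _).sub (hv_eq t ht x).2.2.1
      )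
      (by
        intro t x ht htt1 hneg
        obtain ⟨hu1, hu2, hu3, hu4⟩ := hu_eq t ht x
        obtain ⟨hv1, hv2, hv3, hv4⟩ := hv_eq t ht x
        have hdT : dT (fun t x => u t x * Real.exp (μm * ∫ τ in T..t, ζ τ) - v t x) t x
            = (dT u t x * Real.exp (μm * ∫ τ in T..t, ζ τ)
              + u t x * (Real.exp (μm * ∫ τ in T..t, ζ τ) * (μm * ζ t))) - dT v t x := by
          simp only [dT]
          exact ((hu1.hasDerivAt.mul (hEp t)).sub hv1.hasDerivAt).deriv
        have hx1 : (deriv fun y => u t y * Real.exp (μm * ∫ τ in T..t, ζ τ) - v t y)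
            = fun y => deriv (fun y' => u t y') y * Real.exp (μm * ∫ τ in T..t, ζ τ) -
              deriv (fun y' => v t y') y :=
          funext fun y => (((hu_eq t ht y).2.1.hasDerivAt.mul_const _).sub
            (hv_eq t ht y).2.1.hasDerivAt).deriv
        have hdXX : dXX (fun t x => u t x * Real.exp (μm * ∫ τ in T..t, ζ τ) - v t x) t x
            = dXX u t x * Real.exp (μm * ∫ τ in T..t, ζ τ) - dXX v t x := by
          simp only [dXX]
          rw [hx1]
          exact ((hu3.hasDerivAt.mul_const _).sub hv3.hasDerivAt).deriv
        beta_reduce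
        rw [hdT, hdXX, hu4, hv4]
        have hu := hu_range t ht.le x
        have hv := hv_range t ht.le x
        have he0 : (0:ℝ) < Real.exp (μm * ∫ τ in T..t, ζ τ) := Real.exp_pos _
        have he1 : 1 ≤ Real.exp (μm * ∫ τ in T..t, ζ τ) := by
          rw [Real.one_le_exp_iff]
          have := hΘnonneg t ht.le
          nlinarith
        have hψ0 : 0 < u t x * Real.exp (μm * ∫ τ in T..t, ζ τ) := mul_pos hu.1 he0
        have hneg2 : u t x * Real.exp (μm * ∫ τ in T..t, ζ τ) < v t x := by linarith
        have hψ1 : u t x * Real.exp (μm * ∫ τ in T..t, ζ τ) ≤ 1 := by linarith [hv.2]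
        have hscale : fm (u t x * Real.exp (μm * ∫ τ in T..t, ζ τ))
            ≤ Real.exp (μm * ∫ τ in T..t, ζ τ) * fm (u t x) :=
          hscaleHigh _ _ he1 hu.1 hψ1
        have hfmu : fm (u t x) ≤ μm * u t x := hfmle _ hu.1 hu.2.le
        have hsand2 := (hsand t (u t x) ⟨hu.1.le, hu.2.le⟩).1
        have hz := hζ0 t
        have hlip := hKlip (v t x) ⟨hv.1, hv.2⟩
          (u t x * Real.exp (μm * ∫ τ in T..t, ζ τ)) ⟨hψ0.le, hψ1⟩
        have hlip2 : fm (v t x) - fm (u t x * Real.exp (μm * ∫ τ in T..t, ζ τ))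
            ≤ K * (v t x - u t x * Real.exp (μm * ∫ τ in T..t, ζ τ)) := by
          have h1 := le_trans (le_abs_self _) hlip
          rwa [abs_of_pos (by linarith : (0:ℝ) <
            v t x - u t x * Real.exp (μm * ∫ τ in T..t, ζ τ))] at h1
        have hprod1 : (1 - ζ t) * fm (u t x) * Real.exp (μm * ∫ τ in T..t, ζ τ)
            ≤ f t (u t x) * Real.exp (μm * ∫ τ in T..t, ζ τ) :=
          mul_le_mul_of_nonneg_right hsand2 he0.le
        have hprod2 : ζ t * (Real.exp (μm * ∫ τ in T..t, ζ τ) * fm (u t x))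
            ≤ ζ t * (Real.exp (μm * ∫ τ in T..t, ζ τ) * (μm * u t x)) :=
          mul_le_mul_of_nonneg_left (mul_le_mul_of_nonneg_left hfmu he0.le) hz
        nlinarith [hscale, hlip2, hprod1, hprod2])
      x1
    linarith [hmain]
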